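/- Every VZ(S)-group G is S-nilpotent of S-nilpotence class at most 2. -/

import Mathlib

open scoped BigOperators Pointwise

/-- `f : G → ℂ` is an irreducible character of `G`. -/
def IsIrrChar (G : Type) [Group G] [Fintype G] (f : G → ℂ) : Prop :=
  ∃ V : FDRep ℂ G, CategoryTheory.Simple V ∧ V.character = f

/-- A supercharacter theory of a finite group `G` (Diaconis–Isaacs): a partition
`parts` of the set of irreducible characters of `G` together with a partition of `G`
into `S`-classes (`cls g` is the class of `g`), such that `{1}` is a class, the number
of parts equals the number of classes, and each supercharacter
`σ_X = ∑ χ ∈ X, χ(1)·χ` is constant on every class. -/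
structure SCT (G : Type) [Group G] [Fintype G] where
  parts : Finset (Finset (G → ℂ))
  cls : G → Set G
  parts_cover : ∀ f : G → ℂ, IsIrrChar G f ↔ ∃ X ∈ parts, f ∈ X
  parts_disj : ∀ X ∈ parts, ∀ Y ∈ parts, X ≠ Y → Disjoint X Y
  parts_nonempty : ∀ X ∈ parts, X.Nonempty
  mem_cls : ∀ g : G, g ∈ cls g
  cls_eq : ∀ g h : G, h ∈ cls g → cls h = cls g
  cls_one : cls (1 : G) = {1}
  card_eq : parts.card = Nat.card (Set.range cls)
  const : ∀ X ∈ parts, ∀ g h : G, h ∈ cls g →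
    (∑ χ ∈ X, χ 1 * χ h) = (∑ χ ∈ X, χ 1 * χ g)

variable {G : Type} [Group G] [Fintype G]

namespace SCT

/-- The supercharacter attached to a part `X`. -/
noncomputable def superchar (_S : SCT G) (X : Finset (G → ℂ)) : G → ℂ := fun g => ∑ χ ∈ X, χ 1 * χ g

/-- The set `Irr(S)` of `S`-characters. -/
def Irr (S : SCT G) : Set (G → ℂ) := {f | ∃ X ∈ S.parts, f = S.superchar X}

end SCT

/-- The kernel of a character-like function `f : G → ℂ`. -/
def charKer (f : G → ℂ) : Subgroup G where
  carrier := {g | ∀ h, f (g * h) = f h}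
  one_mem' := by intro h; simp
  mul_mem' := by intro a b ha hb h; rw [mul_assoc, ha, hb]
  inv_mem' := by
    intro a ha h
    have := ha (a⁻¹ * h)
    rw [mul_inv_cancel_left] at this
    exact this.symm

namespace SCT

/-- `[H,S]`, the subgroup generated by the `g⁻¹k` with `g ∈ H`, `k ∈ Cl_S(g)`. -/
def comm (S : SCT G) (H : Subgroup G) : Subgroup G :=
  Subgroup.closure {x | ∃ g ∈ H, ∃ k ∈ S.cls g, x = g⁻¹ * k}

/-- `[G,S]`. -/
def derived (S : SCT G) : Subgroup G := S.comm ⊤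

/-- `Irr(S | N)`: the `S`-characters whose kernel does not contain `N`. -/
def IrrRel (S : SCT G) (N : Subgroup G) : Set (G → ℂ) :=
  {f | f ∈ S.Irr ∧ ¬ N ≤ charKer f}

/-- `g` is an `S`-Camina element: all of `Irr(S | [G,S])` vanishes at `g`. -/
def IsCaminaElt (S : SCT G) (g : G) : Prop :=
  ∀ f ∈ S.IrrRel S.derived, f g = 0

/-- `N` is `S`-normal: a union of `S`-classes. -/
def IsNormal (S : SCT G) (N : Subgroup G) : Prop :=
  ∀ g ∈ N, S.cls g ⊆ N

/-- `(G,N)` is a generalised `S`-Camina pair. -/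
def IsGCP (S : SCT G) (N : Subgroup G) : Prop :=
  S.IsNormal N ∧ ∀ g : G, g ∉ N → S.IsCaminaElt g

/-- The set `Z(S)` of elements with singleton `S`-class. -/
def centerSet (S : SCT G) : Set G := {g | S.cls g = {g}}

/-- The vanishing-off subgroup `V(S | N)`. -/
def V (S : SCT G) (N : Subgroup G) : Subgroup G :=
  Subgroup.closure {g | ∃ f ∈ S.IrrRel N, f g ≠ 0}

/-- `V(S) = V(S | [G,S])`. -/
def VS (S : SCT G) : Subgroup G := S.V S.derived

/-- `U(S | N)`: the product of all `S`-normal subgroups `H` with `V(S | H) ≤ N`. -/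
def U (S : SCT G) (N : Subgroup G) : Subgroup G :=
  ⨆ (H : Subgroup G) (_ : S.IsNormal H ∧ S.V H ≤ N), H

/-- The upper `S`-central series: `ζ_0 = 1` and `ζ_{i+1}/ζ_i = Z(S^{G/ζ_i})`,
i.e. `ζ_{i+1}` consists of the `g` whose `S`-class maps onto the single coset `gζ_i`. -/
def zeta (S : SCT G) : ℕ → Subgroup G
  | 0 => ⊥
  | i + 1 => Subgroup.closure {g | ∀ k ∈ S.cls g, g⁻¹ * k ∈ S.zeta i}

/-- The lower `S`-central series `γ_1 = G`, `γ_{i+1} = [γ_i, S]` (with `γ_0 := G`). -/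
def gamma (S : SCT G) : ℕ → Subgroup G
  | 0 => ⊤
  | 1 => ⊤
  | n + 2 => S.comm (S.gamma (n + 1))

/-- The series `V_1(S) = V(S)`, `V_{i+1}(S) = [V_i(S), S]` (with `V_0 := V(S)`). -/
def Vseq (S : SCT G) : ℕ → Subgroup G
  | 0 => S.VS
  | 1 => S.VS
  | n + 2 => S.comm (S.Vseq (n + 1))

/-- `G` is a `VZ(S)`-group: every member of `Irr(S | [G,S])` vanishes off `Z(S)`. -/
def IsVZ (S : SCT G) : Prop :=
  ∀ f ∈ S.IrrRel S.derived, ∀ g : G, g ∉ S.centerSet → f g = 0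

end SCT

section Aux

open CategoryTheory
open scoped Classical

noncomputable instance : Invertible ((Fintype.card G : ℂ)) :=
  invertibleOfNonzero (Nat.cast_ne_zero.mpr Fintype.card_ne_zero)

private lemma orth_aux (V W : FDRep ℂ G) [Simple V] [Simple W] :
    ∑ g : G, V.character g * W.character g⁻¹ =
      if Nonempty (V ≅ W) then (Fintype.card G : ℂ) else 0 := by
  classical
  have hc : (Nat.card G : ℂ) ≠ 0 := by
    rw [Nat.card_eq_fintype_card]; exact Nat.cast_ne_zero.mpr Fintype.card_ne_zero
  letI : Invertible ((Nat.card G : ℂ)) := invertibleOfNonzero hc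
  have h := FDRep.char_orthonormal (k := ℂ) (G := G) V W
  rw [inv_mul_eq_iff_eq_mul₀ hc, Nat.card_eq_fintype_card] at h
  have h2 : ∑ g : G, V.character g * W.character g⁻¹ =
      (Fintype.card G : ℂ) • if Nonempty (V ≅ W) then (1 : ℂ) else 0 := by
    rw [h, smul_eq_mul]
  rw [h2]
  split_ifs <;> simp

private lemma pair_self {χ : G → ℂ} (hχ : IsIrrChar G χ) :
    ∑ g : G, χ g * χ g⁻¹ = (Fintype.card G : ℂ) := by
  obtain ⟨V, hs, rfl⟩ := hχ
  haveI := hs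
  rw [orth_aux V V, if_pos ⟨Iso.refl V⟩]

private lemma pair_ne {χ ψ : G → ℂ} (hχ : IsIrrChar G χ) (hψ : IsIrrChar G ψ)
    (hne : ψ ≠ χ) : ∑ g : G, ψ g * χ g⁻¹ = 0 := by
  obtain ⟨V, hsV, rfl⟩ := hψ
  obtain ⟨W, hsW, rfl⟩ := hχ
  haveI := hsV; haveI := hsW
  rw [orth_aux V W, if_neg]
  rintro ⟨i⟩
  exact hne (FDRep.char_iso i)

private lemma pair_irr {χ ψ : G → ℂ} (hχ : IsIrrChar G χ) (hψ : IsIrrChar G ψ) :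
    ∑ g : G, ψ g * χ g⁻¹ = if ψ = χ then (Fintype.card G : ℂ) else 0 := by
  classical
  split_ifs with hcase
  · subst hcase; exact pair_self hψ
  · exact pair_ne hχ hψ hcase

private lemma irr_one_nat {χ : G → ℂ} (hχ : IsIrrChar G χ) :
    ∃ n : ℕ, 0 < n ∧ χ 1 = n := by
  obtain ⟨V, hs, hc⟩ := hχ
  refine ⟨Module.finrank ℂ V, ?_, by rw [← hc, FDRep.char_one]⟩
  by_contra hn
  push_neg at hn
  have h0 : Module.finrank ℂ V = 0 := Nat.le_zero.mp hn
  haveI : Subsingleton V := Module.finrank_zero_iff.mp h0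
  have hz : ∀ g : G, χ g = 0 := by
    intro g
    rw [← hc]
    show LinearMap.trace ℂ V (V.ρ g) = 0
    rw [Subsingleton.elim (V.ρ g) 0, map_zero]
  have := pair_self ⟨V, hs, hc⟩
  rw [Finset.sum_congr rfl (fun g _ => by rw [hz g, zero_mul])] at this
  simp only [Finset.sum_const_zero] at this
  exact (Nat.cast_ne_zero.mpr Fintype.card_ne_zero) this.symm

private lemma irr_one_ne_zero {χ : G → ℂ} (hχ : IsIrrChar G χ) : χ 1 ≠ 0 := by
  obtain ⟨n, hn, he⟩ := irr_one_nat hχ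
  rw [he]
  exact_mod_cast hn.ne'

namespace SCT

variable (S : SCT G)

private lemma irr_of_mem {X : Finset (G → ℂ)} (hX : X ∈ S.parts) {χ : G → ℂ}
    (hχ : χ ∈ X) : IsIrrChar G χ := (S.parts_cover χ).mpr ⟨X, hX, hχ⟩

private lemma pair_super {X : Finset (G → ℂ)} (hX : X ∈ S.parts) {χ : G → ℂ}
    (hχ : IsIrrChar G χ) :
    ∑ g : G, S.superchar X g * χ g⁻¹ =
      if χ ∈ X then χ 1 * (Fintype.card G : ℂ) else 0 := by
  classical
  have hstep : ∀ g : G, S.superchar X g * χ g⁻¹ = ∑ ψ ∈ X, ψ 1 * (ψ g * χ g⁻¹) := by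
    intro g
    rw [superchar, Finset.sum_mul]
    exact Finset.sum_congr rfl fun ψ _ => by ring
  rw [Finset.sum_congr rfl fun g _ => hstep g, Finset.sum_comm]
  have hterm : ∀ ψ ∈ X, ∑ g : G, ψ 1 * (ψ g * χ g⁻¹) =
      if ψ = χ then ψ 1 * (Fintype.card G : ℂ) else 0 := by
    intro ψ hψ
    rw [← Finset.mul_sum, pair_irr hχ (S.irr_of_mem hX hψ), mul_ite, mul_zero]
  rw [Finset.sum_congr rfl hterm, Finset.sum_ite_eq' X χ (fun ψ => ψ 1 * (Fintype.card G : ℂ))]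


private lemma sum_pair (c : {X : Finset (G → ℂ) // X ∈ S.parts} → ℂ) {χ : G → ℂ}
    (hχ : IsIrrChar G χ) (i : {X : Finset (G → ℂ) // X ∈ S.parts}) (hχX : χ ∈ i.1) :
    ∑ g : G, (∑ X : {X : Finset (G → ℂ) // X ∈ S.parts}, c X * S.superchar X.1 g) * χ g⁻¹
      = c i * (χ 1 * (Fintype.card G : ℂ)) := by
  classical
  have hstep : ∀ g : G,
      (∑ X : {X : Finset (G → ℂ) // X ∈ S.parts}, c X * S.superchar X.1 g) * χ g⁻¹ =
      ∑ X : {X : Finset (G → ℂ) // X ∈ S.parts}, c X * (S.superchar X.1 g * χ g⁻¹) := by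
    intro g
    rw [Finset.sum_mul]
    exact Finset.sum_congr rfl fun X _ => by ring
  rw [Finset.sum_congr rfl fun g _ => hstep g, Finset.sum_comm]
  have hterm : ∀ X : {X : Finset (G → ℂ) // X ∈ S.parts}, X ∈ Finset.univ →
      ∑ g : G, c X * (S.superchar X.1 g * χ g⁻¹) =
      if χ ∈ X.1 then c X * (χ 1 * (Fintype.card G : ℂ)) else 0 := by
    intro X _
    rw [← Finset.mul_sum, S.pair_super X.2 hχ, mul_ite, mul_zero]
  rw [Finset.sum_congr rfl hterm,
    Finset.sum_eq_single i (fun j _ hji => ?_) (fun hni => absurd (Finset.mem_univ i) hni)]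
  · rw [if_pos hχX]
  · rw [if_neg]
    intro hmem
    have hne : i.1 ≠ j.1 := fun he => hji (Subtype.ext he.symm)
    exact Finset.disjoint_left.mp (S.parts_disj i.1 i.2 j.1 j.2 hne) hχX hmem

private def clsSetoid (S : SCT G) : Setoid G :=
  ⟨fun a b => S.cls a = S.cls b, ⟨fun _ => rfl, Eq.symm, Eq.trans⟩⟩

private lemma card_quot : Nat.card (Quotient S.clsSetoid) = S.parts.card := by
  classical
  rw [S.card_eq]
  have hb : Function.Bijective (Quotient.lift (fun g => (⟨S.cls g, g, rfl⟩ : Set.range S.cls))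
      (fun a b hab => Subtype.ext hab) : Quotient S.clsSetoid → Set.range S.cls) := by
    constructor
    · rintro ⟨a⟩ ⟨b⟩ hab
      exact Quotient.sound (Subtype.ext_iff.mp hab)
    · rintro ⟨s, g, rfl⟩
      exact ⟨⟦g⟧, rfl⟩
  exact Nat.card_eq_of_bijective _ hb

/-- The key spanning lemma: every class-constant function is a combination of
supercharacters. -/
private lemma exists_coeffs (F : G → ℂ) (hF : ∀ g h, h ∈ S.cls g → F h = F g) :
    ∃ c : {X : Finset (G → ℂ) // X ∈ S.parts} → ℂ,
      ∀ y : G, F y = ∑ X : {X : Finset (G → ℂ) // X ∈ S.parts}, c X * S.superchar X.1 y := by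
  classical
  letI : Fintype (Quotient S.clsSetoid) := Fintype.ofFinite _
  have hresp : ∀ X : {X : Finset (G → ℂ) // X ∈ S.parts}, ∀ a b : G,
      S.clsSetoid.r a b → S.superchar X.1 a = S.superchar X.1 b := by
    intro X a b hab
    have hmem : b ∈ S.cls a := by
      have : S.cls a = S.cls b := hab
      rw [this]; exact S.mem_cls b
    exact (S.const X.1 X.2 a b hmem).symm
  set b : {X : Finset (G → ℂ) // X ∈ S.parts} → (Quotient S.clsSetoid → ℂ) :=
    fun X => Quotient.lift (S.superchar X.1) (hresp X) with hbdef
  have hbeval : ∀ X, ∀ g : G, b X ⟦g⟧ = S.superchar X.1 g := fun X g => rfl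
  have hli : LinearIndependent ℂ b := by
    rw [Fintype.linearIndependent_iff]
    intro c hc i
    obtain ⟨χ, hχX⟩ := S.parts_nonempty i.1 i.2
    have hχ := S.irr_of_mem i.2 hχX
    have hzero : ∀ g : G,
        ∑ X : {X : Finset (G → ℂ) // X ∈ S.parts}, c X * S.superchar X.1 g = 0 := by
      intro g
      have := congrFun hc ⟦g⟧
      simpa [hbdef] using this
    have h0 : ∑ g : G,
        (∑ X : {X : Finset (G → ℂ) // X ∈ S.parts}, c X * S.superchar X.1 g) * χ g⁻¹ = 0 := by
      rw [Finset.sum_congr rfl fun g _ => by rw [hzero g, zero_mul], Finset.sum_const_zero]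
    rw [S.sum_pair c hχ i hχX] at h0
    rcases mul_eq_zero.mp h0 with h | h
    · exact h
    · exact absurd h (mul_ne_zero (irr_one_ne_zero hχ)
        (Nat.cast_ne_zero.mpr Fintype.card_ne_zero))
  have hnatcard : Fintype.card {X : Finset (G → ℂ) // X ∈ S.parts}
      = Fintype.card (Quotient S.clsSetoid) := by
    rw [Fintype.card_coe, ← S.card_quot, Nat.card_eq_fintype_card]
  have hcard : Fintype.card {X : Finset (G → ℂ) // X ∈ S.parts}
      = Module.finrank ℂ (Quotient S.clsSetoid → ℂ) := by
    rw [Module.finrank_pi, hnatcard]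
  haveI hne : Nonempty {X : Finset (G → ℂ) // X ∈ S.parts} := by
    rw [← Fintype.card_pos_iff, hnatcard]
    exact @Fintype.card_pos _ _ ⟨⟦1⟧⟩
  set B := basisOfLinearIndependentOfCardEqFinrank hli hcard with hBdef
  have hB : ∀ i, B i = b i :=
    fun i => congrFun (coe_basisOfLinearIndependentOfCardEqFinrank hli hcard) i
  set Fbar : Quotient S.clsSetoid → ℂ :=
    Quotient.lift F (fun a b hab => by
      have hmem : b ∈ S.cls a := by
        have : S.cls a = S.cls b := hab
        rw [this]; exact S.mem_cls b
      exact (hF a b hmem).symm) with hFbar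
  refine ⟨fun X => B.repr Fbar X, fun y => ?_⟩
  have hrepr := B.sum_repr Fbar
  have := congrFun hrepr ⟦y⟧
  calc F y = Fbar ⟦y⟧ := rfl
    _ = ∑ X : {X : Finset (G → ℂ) // X ∈ S.parts}, B.repr Fbar X * S.superchar X.1 y := by
        rw [← this]
        rw [Finset.sum_apply]
        exact Finset.sum_congr rfl fun X _ => by
          rw [Pi.smul_apply, smul_eq_mul, hB X, hbeval X y]

private lemma coeff_extract {F : G → ℂ} {c : {X : Finset (G → ℂ) // X ∈ S.parts} → ℂ}
    (hc : ∀ y : G, F y = ∑ X : {X : Finset (G → ℂ) // X ∈ S.parts}, c X * S.superchar X.1 y)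
    (i : {X : Finset (G → ℂ) // X ∈ S.parts}) {χ : G → ℂ} (hχX : χ ∈ i.1) :
    ∑ g : G, F g * χ g⁻¹ = c i * (χ 1 * (Fintype.card G : ℂ)) := by
  rw [Finset.sum_congr rfl fun g _ => by rw [hc g]]
  exact S.sum_pair c (S.irr_of_mem i.2 hχX) i hχX

private lemma sum_superchar (y : G) :
    ∑ X : {X : Finset (G → ℂ) // X ∈ S.parts}, S.superchar X.1 y
      = if y = 1 then (Fintype.card G : ℂ) else 0 := by
  classical
  have hcards : (Fintype.card G : ℂ) ≠ 0 := Nat.cast_ne_zero.mpr Fintype.card_ne_zero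
  set F : G → ℂ := fun g => if g = 1 then (1 : ℂ) else 0 with hFdef
  have hF : ∀ g h', h' ∈ S.cls g → F h' = F g := by
    intro g h' hh'
    by_cases hg : g = 1
    · subst hg
      rw [S.cls_one, Set.mem_singleton_iff] at hh'
      rw [hh']
    · have hh1 : h' ≠ 1 := by
        rintro rfl
        have h1 : S.cls (1 : G) = S.cls g := S.cls_eq g 1 hh'
        rw [S.cls_one] at h1
        have := S.mem_cls g
        rw [← h1, Set.mem_singleton_iff] at this
        exact hg this
      simp only [hFdef]
      rw [if_neg hh1, if_neg hg]
  obtain ⟨c, hc⟩ := S.exists_coeffs F hF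
  have hcoef : ∀ i : {X : Finset (G → ℂ) // X ∈ S.parts}, c i = ((Fintype.card G : ℂ))⁻¹ := by
    intro i
    obtain ⟨χ, hχX⟩ := S.parts_nonempty i.1 i.2
    have hχ := S.irr_of_mem i.2 hχX
    have h1 := S.coeff_extract hc i hχX
    have h2 : ∑ g : G, F g * χ g⁻¹ = χ 1 := by
      simp only [hFdef, ite_mul, one_mul, zero_mul]
      rw [Finset.sum_ite_eq' Finset.univ (1 : G) (fun g => χ g⁻¹),
        if_pos (Finset.mem_univ _), inv_one]
    rw [h2] at h1
    have hχ1 := irr_one_ne_zero hχ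
    have hmul : ((Fintype.card G : ℂ) * c i) * χ 1 = 1 * χ 1 := by
      linear_combination -h1
    have hmul2 := mul_right_cancel₀ hχ1 hmul
    exact eq_inv_of_mul_eq_one_right hmul2
  have hy := hc y
  rw [Finset.sum_congr rfl (fun X _ => by rw [hcoef X]), ← Finset.mul_sum] at hy
  have h3 : (Fintype.card G : ℂ) * F y
      = ∑ X : {X : Finset (G → ℂ) // X ∈ S.parts}, S.superchar X.1 y := by
    rw [hy, ← mul_assoc, mul_inv_cancel₀ hcards, one_mul]
  rw [← h3]
  simp only [hFdef]
  rw [mul_ite, mul_one, mul_zero]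

end SCT

end Aux

/-- every `VZ(S)`-group is `S`-nilpotent of class at most `2`,
i.e. `γ_3(S) = 1`. -/
theorem isVZ_gamma_three_eq_bot (S : SCT G) (h : S.IsVZ) : S.gamma 3 = ⊥ := by
  classical
  have key : ∀ x ∈ S.derived, S.cls x = {x} := by
    intro x hxd
    by_contra hxc
    have hxcen : x ∉ S.centerSet := hxc
    have hx1 : x ≠ 1 := by
      rintro rfl
      exact hxc S.cls_one
    have hsplit : ∀ X : {X : Finset (G → ℂ) // X ∈ S.parts}, S.superchar X.1 x =
        if S.derived ≤ charKer (S.superchar X.1) then S.superchar X.1 1 else 0 := by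
      intro X
      split_ifs with hle
      · have hker : ∀ h' : G, S.superchar X.1 (x * h') = S.superchar X.1 h' := hle hxd
        have := hker 1
        rwa [mul_one] at this
      · exact h _ ⟨⟨X.1, X.2, rfl⟩, hle⟩ x hxcen
    have hsum0 : ∑ X : {X : Finset (G → ℂ) // X ∈ S.parts},
        (if S.derived ≤ charKer (S.superchar X.1) then S.superchar X.1 1 else 0) = 0 := by
      rw [← Finset.sum_congr rfl (fun X _ => hsplit X), S.sum_superchar x, if_neg hx1]
    -- convert to a sum of naturals
    set nn : (G → ℂ) → ℕ := fun χ => if hχ : ∃ n : ℕ, 0 < n ∧ χ 1 = n then hχ.choose else 0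
      with hnndef
    have hnn_spec : ∀ {X : Finset (G → ℂ)} {χ : G → ℂ}, X ∈ S.parts → χ ∈ X →
        0 < nn χ ∧ χ 1 = nn χ := by
      intro X χ hX hχ
      have hE := irr_one_nat (S.irr_of_mem hX hχ)
      simp only [hnndef, dif_pos hE]
      exact ⟨hE.choose_spec.1, hE.choose_spec.2⟩
    have hnatval : ∀ X : {X : Finset (G → ℂ) // X ∈ S.parts},
        S.superchar X.1 1 = ((∑ χ ∈ X.1, (nn χ) ^ 2 : ℕ) : ℂ) := by
      intro X
      show (∑ χ ∈ X.1, χ 1 * χ 1) = ((∑ χ ∈ X.1, (nn χ) ^ 2 : ℕ) : ℂ)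
      push_cast
      refine Finset.sum_congr rfl fun χ hχ => ?_
      rw [(hnn_spec X.2 hχ).2]
      ring
    have hnat0 : ∑ X : {X : Finset (G → ℂ) // X ∈ S.parts},
        (if S.derived ≤ charKer (S.superchar X.1) then (∑ χ ∈ X.1, (nn χ) ^ 2) else 0) = 0 := by
      have hcast : ((∑ X : {X : Finset (G → ℂ) // X ∈ S.parts},
          (if S.derived ≤ charKer (S.superchar X.1) then (∑ χ ∈ X.1, (nn χ) ^ 2) else 0) : ℕ) : ℂ)
          = 0 := by
        rw [Nat.cast_sum]
        refine Eq.trans (Finset.sum_congr rfl fun X _ => ?_) hsum0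
        rw [apply_ite (Nat.cast : ℕ → ℂ), Nat.cast_zero, ← hnatval X]
      exact_mod_cast hcast
    have hT : ∀ X : {X : Finset (G → ℂ) // X ∈ S.parts},
        ¬ S.derived ≤ charKer (S.superchar X.1) := by
      intro X hle
      have hterm := (Finset.sum_eq_zero_iff.mp hnat0) X (Finset.mem_univ X)
      rw [if_pos hle] at hterm
      obtain ⟨χ, hχX⟩ := S.parts_nonempty X.1 X.2
      have hz := (Finset.sum_eq_zero_iff.mp hterm) χ hχX
      have hpos := (hnn_spec X.2 hχX).1
      exact hpos.ne' (pow_eq_zero_iff (by norm_num : (2:ℕ) ≠ 0) |>.mp hz)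
    have hzero2 : ∀ X : {X : Finset (G → ℂ) // X ∈ S.parts}, S.superchar X.1 x = 0 := by
      intro X
      rw [hsplit X, if_neg (hT X)]
    set F : G → ℂ := fun g => if g ∈ S.cls x then (1 : ℂ) else 0 with hFdef
    have hF : ∀ g h', h' ∈ S.cls g → F h' = F g := by
      intro g h' hh'
      have hgh : S.cls h' = S.cls g := S.cls_eq g h' hh'
      have hiff : h' ∈ S.cls x ↔ g ∈ S.cls x := by
        constructor
        · intro hmem
          have h1 : S.cls h' = S.cls x := S.cls_eq x h' hmem
          have h2 : S.cls g = S.cls x := by rw [← hgh, h1]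
          rw [← h2]; exact S.mem_cls g
        · intro hmem
          have h1 : S.cls g = S.cls x := S.cls_eq x g hmem
          have h2 : S.cls h' = S.cls x := by rw [hgh, h1]
          rw [← h2]; exact S.mem_cls h'
      simp only [hFdef]
      exact if_congr hiff rfl rfl
    obtain ⟨c, hc⟩ := S.exists_coeffs F hF
    have h1 : F x = 1 := by
      simp only [hFdef]
      rw [if_pos (S.mem_cls x)]
    rw [hc x, Finset.sum_congr rfl (fun X _ => by rw [hzero2 X, mul_zero]),
      Finset.sum_const_zero] at h1
    exact zero_ne_one h1
  have hg3 : S.gamma 3 = S.comm S.derived := rfl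
  rw [hg3, eq_bot_iff, SCT.comm]
  refine (Subgroup.closure_le ⊥).mpr ?_
  rintro _ ⟨g, hgd, k, hk, rfl⟩
  rw [key g hgd, Set.mem_singleton_iff] at hk
  subst hk
  simp [Subgroup.mem_bot]
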